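/- For every integer d ≥ 2 there exists a positive semidefinite matrix Y on ℂ^d⊗ℂ^d such that the block matrix [[Y, −T_b(J)], [−T_b(J), Y]] is positive semidefinite and the partial trace satisfies Tr_b(Y) = (1 + 1/√(d−1))·I_d, where J is the Choi operator of M_d. (This establishes ‖T∘M_d‖_⋄ ≤ 1 + 1/√(d−1) and hence the quantum-capacity bound Q(M_d) ≤ log₂(1 + 1/√(d−1)); one may take Y = (1/(d−1))∑_{j=0}^{d−2}|0⟩⟨0|⊗|j⟩⟨j| + (1/√(d−1))|0⟩⟨0|⊗|d−1⟩⟨d−1| + ∑_{j=1}^{d−1}|j⟩⟨j|⊗|d−1⟩⟨d−1| + |Ξ⟩⟨Ξ| with |Ξ⟩ = (d−1)^{−1/4}∑_{j=1}^{d−1}|j⟩⊗|j−1⟩.) -/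

import Mathlib

open Matrix Kronecker ComplexOrder

/-- Partial transpose on the second tensor factor. -/
noncomputable def ptransposeB {m n : ℕ}
    (M : Matrix (Fin m × Fin n) (Fin m × Fin n) ℂ) :
    Matrix (Fin m × Fin n) (Fin m × Fin n) ℂ :=
  Matrix.of fun p q => M (p.1, q.2) (q.1, p.2)

/-- Partial trace over the second tensor factor. -/
noncomputable def ptraceB {m n : ℕ}
    (M : Matrix (Fin m × Fin n) (Fin m × Fin n) ℂ) :
    Matrix (Fin m) (Fin m) ℂ :=
  Matrix.of fun i k => ∑ j, M (i, j) (k, j)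

/-- The basis ket |i,j⟩ of ℂ^d ⊗ ℂ^d (zero if out of range). -/
noncomputable def ket2 (d i j : ℕ) : Fin d × Fin d → ℂ := fun p =>
  if (p.1 : ℕ) = i ∧ (p.2 : ℕ) = j then 1 else 0

/-- The unnormalized Choi operator of the channel M_d. -/
noncomputable def choiMd (d : ℕ) : Matrix (Fin d × Fin d) (Fin d × Fin d) ℂ :=
  ∑ j ∈ Finset.range (d - 1),
    ((1 / ((d : ℂ) - 1)) • Matrix.vecMulVec (ket2 d 0 j) (star (ket2 d 0 j)) +
      Matrix.vecMulVec (ket2 d (j+1) (d-1)) (star (ket2 d (j+1) (d-1))) +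
      ((1 / (Real.sqrt ((d : ℝ) - 1)) : ℝ) : ℂ) •
        (Matrix.vecMulVec (ket2 d 0 j) (star (ket2 d (j+1) (d-1))) +
          Matrix.vecMulVec (ket2 d (j+1) (d-1)) (star (ket2 d 0 j))))


section Aux

open Matrix ComplexOrder

/-- outer product `u uᴴ`. -/
noncomputable def outerC {n : Type*} (u : n → ℂ) : Matrix n n ℂ :=
  Matrix.vecMulVec u (star u)

lemma outerC_apply {n : Type*} (u : n → ℂ) (p q : n) :
    outerC u p q = u p * star (u q) := rfl

lemma outerC_posSemidef {n : Type*} [Fintype n] (u : n → ℂ) :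
    (outerC u).PosSemidef := by
  rw [Matrix.posSemidef_iff_dotProduct_mulVec]
  constructor
  · ext i j
    simp [outerC, Matrix.conjTranspose_apply, Matrix.vecMulVec_apply, mul_comm]
  · intro x
    have h : star x ⬝ᵥ (outerC u *ᵥ x)
        = star (star u ⬝ᵥ x) * (star u ⬝ᵥ x) := by
      simp only [outerC, dotProduct, Matrix.mulVec, Matrix.vecMulVec_apply, Pi.star_apply,
        star_sum, star_mul', star_star, Finset.sum_mul, Finset.mul_sum]
      rw [Finset.sum_comm]
      exact Finset.sum_congr rfl fun i _ => Finset.sum_congr rfl fun j _ => by ring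
    rw [h]
    exact star_mul_self_nonneg _

lemma psd_smulC {n : Type*} [Fintype n] {M : Matrix n n ℂ} (hM : M.PosSemidef)
    {a : ℂ} (ha : 0 ≤ a) : (a • M).PosSemidef := by
  have haim : a.im = 0 := by
    rw [Complex.le_def] at ha; exact ha.2.symm
  rw [Matrix.posSemidef_iff_dotProduct_mulVec]
  constructor
  · show (a • M)ᴴ = a • M
    rw [Matrix.conjTranspose_smul, Complex.star_def, Complex.conj_eq_iff_im.mpr haim, hM.1]
  · intro x
    rw [Matrix.smul_mulVec, dotProduct_smul, smul_eq_mul]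
    exact mul_nonneg ha (hM.dotProduct_mulVec_nonneg x)

lemma psd_sum {n : Type*} [Fintype n] {ι : Type*} (s : Finset ι)
    (f : ι → Matrix n n ℂ) (h : ∀ i ∈ s, (f i).PosSemidef) :
    (∑ i ∈ s, f i).PosSemidef :=
  Finset.sum_induction f _ (fun _ _ ha hb => ha.add hb) Matrix.PosSemidef.zero h

lemma ptransposeB_ket (d i j k l : ℕ) :
    ptransposeB (Matrix.vecMulVec (ket2 d i j) (star (ket2 d k l)))
      = Matrix.vecMulVec (ket2 d i l) (star (ket2 d k j)) := by
  ext ⟨p1, p2⟩ ⟨q1, q2⟩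
  simp only [ptransposeB, Matrix.of_apply, Matrix.vecMulVec_apply, ket2, Pi.star_apply,
    apply_ite (star : ℂ → ℂ), star_one, star_zero]
  split_ifs <;> simp_all

lemma ptransposeB_add {m n : ℕ} (A B : Matrix (Fin m × Fin n) (Fin m × Fin n) ℂ) :
    ptransposeB (A + B) = ptransposeB A + ptransposeB B := by
  ext p q; simp [ptransposeB]

lemma ptransposeB_smul {m n : ℕ} (a : ℂ) (A : Matrix (Fin m × Fin n) (Fin m × Fin n) ℂ) :
    ptransposeB (a • A) = a • ptransposeB A := by
  ext p q; simp [ptransposeB]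

lemma ptransposeB_sum {m n : ℕ} {ι : Type*} (s : Finset ι)
    (f : ι → Matrix (Fin m × Fin n) (Fin m × Fin n) ℂ) :
    ptransposeB (∑ j ∈ s, f j) = ∑ j ∈ s, ptransposeB (f j) := by
  ext p q; simp [ptransposeB, Finset.sum_apply, Matrix.sum_apply]

lemma vecMulVec_smul_right {n : Type*} (u v : n → ℂ) (a : ℂ) :
    Matrix.vecMulVec u (a • v) = a • Matrix.vecMulVec u v := by
  ext p q; simp [Matrix.vecMulVec_apply]; ring

lemma vecMulVec_smul_left {n : Type*} (u v : n → ℂ) (a : ℂ) :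
    Matrix.vecMulVec (a • u) v = a • Matrix.vecMulVec u v := by
  ext p q; simp [Matrix.vecMulVec_apply]; ring

lemma vecMulVec_sum_right {n : Type*} {ι : Type*} (s : Finset ι) (u : n → ℂ)
    (v : ι → n → ℂ) :
    Matrix.vecMulVec u (∑ j ∈ s, v j) = ∑ j ∈ s, Matrix.vecMulVec u (v j) := by
  ext p q
  simp [Matrix.vecMulVec_apply, Matrix.sum_apply, Finset.sum_apply, Finset.mul_sum]

lemma vecMulVec_sum_left {n : Type*} {ι : Type*} (s : Finset ι) (u : n → ℂ)
    (v : ι → n → ℂ) :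
    Matrix.vecMulVec (∑ j ∈ s, v j) u = ∑ j ∈ s, Matrix.vecMulVec (v j) u := by
  ext p q
  simp [Matrix.vecMulVec_apply, Matrix.sum_apply, Finset.sum_apply, Finset.sum_mul]

/-- expansion of the outer product of `t • u - x`. -/
lemma outerC_expand_sub {n : Type*} (t : ℝ) (u x : n → ℂ) :
    outerC ((t : ℂ) • u - x)
      = ((t : ℂ) * t) • outerC u
        - (t : ℂ) • (Matrix.vecMulVec u (star x) + Matrix.vecMulVec x (star u))
        + outerC x := by
  ext p q
  simp only [outerC, Matrix.vecMulVec_apply, Matrix.sub_apply, Matrix.add_apply,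
    Matrix.smul_apply, Pi.sub_apply, Pi.smul_apply, Pi.star_apply, star_sub, star_smul,
    Complex.star_def, Complex.conj_ofReal, smul_eq_mul, RingHom.id_apply]
  ring

lemma outerC_expand_add {n : Type*} (t : ℝ) (u x : n → ℂ) :
    outerC ((t : ℂ) • u + x)
      = ((t : ℂ) * t) • outerC u
        + (t : ℂ) • (Matrix.vecMulVec u (star x) + Matrix.vecMulVec x (star u))
        + outerC x := by
  ext p q
  simp only [outerC, Matrix.vecMulVec_apply, Matrix.sub_apply, Matrix.add_apply,
    Matrix.smul_apply, Pi.add_apply, Pi.smul_apply, Pi.star_apply, star_add, star_smul,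
    Complex.star_def, Complex.conj_ofReal, smul_eq_mul, RingHom.id_apply]
  ring

lemma outerC_smul_real {n : Type*} (t : ℝ) (u : n → ℂ) :
    outerC ((t : ℂ) • u) = (((t * t : ℝ)) : ℂ) • outerC u := by
  ext p q
  simp only [outerC, Matrix.vecMulVec_apply, Matrix.smul_apply, Pi.smul_apply, Pi.star_apply,
    star_smul, Complex.star_def, Complex.conj_ofReal, smul_eq_mul, Complex.ofReal_mul]
  ring

/-- outer product of `Sum.elim u u` as a block matrix. -/
lemma outerC_elim_pos {n : Type*} (u : n → ℂ) :
    outerC (Sum.elim u u)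
      = Matrix.fromBlocks (outerC u) (outerC u) (outerC u) (outerC u) := by
  ext p q
  rcases p with p | p <;> rcases q with q | q <;>
    simp [outerC, Matrix.vecMulVec_apply, Matrix.fromBlocks]

/-- outer product of `Sum.elim u (-u)` as a block matrix. -/
lemma outerC_elim_neg {n : Type*} (u : n → ℂ) :
    outerC (Sum.elim u (-u))
      = Matrix.fromBlocks (outerC u) (-(outerC u)) (-(outerC u)) (outerC u) := by
  ext p q
  rcases p with p | p <;> rcases q with q | q <;>
    simp [outerC, Matrix.vecMulVec_apply, Matrix.fromBlocks]

lemma fromBlocks_sum {n : Type*} {ι : Type*} (s : Finset ι)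
    (A B C D : ι → Matrix n n ℂ) :
    (∑ j ∈ s, Matrix.fromBlocks (A j) (B j) (C j) (D j))
      = Matrix.fromBlocks (∑ j ∈ s, A j) (∑ j ∈ s, B j) (∑ j ∈ s, C j) (∑ j ∈ s, D j) := by
  ext p q
  rcases p with p | p <;> rcases q with q | q <;>
    simp [Matrix.fromBlocks, Matrix.sum_apply]

lemma ptraceB_add {m n : ℕ} (A B : Matrix (Fin m × Fin n) (Fin m × Fin n) ℂ) :
    ptraceB (A + B) = ptraceB A + ptraceB B := by
  ext i k; simp [ptraceB, Finset.sum_add_distrib]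

lemma ptraceB_smul {m n : ℕ} (a : ℂ) (A : Matrix (Fin m × Fin n) (Fin m × Fin n) ℂ) :
    ptraceB (a • A) = a • ptraceB A := by
  ext i k; simp [ptraceB, Finset.mul_sum]

lemma ptraceB_sum {m n : ℕ} {ι : Type*} (s : Finset ι)
    (f : ι → Matrix (Fin m × Fin n) (Fin m × Fin n) ℂ) :
    ptraceB (∑ j ∈ s, f j) = ∑ j ∈ s, ptraceB (f j) := by
  ext i k
  simp [ptraceB, Matrix.sum_apply]
  rw [Finset.sum_comm]

end Aux

section Aux2

open Matrix ComplexOrder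

lemma Kval (d : ℕ) (p : Fin d × Fin d) :
    (∑ j ∈ Finset.range (d-1), ket2 d (j+1) j) p
      = if (p.1 : ℕ) = (p.2 : ℕ) + 1 then 1 else 0 := by
  rw [Finset.sum_apply]
  by_cases h : (p.1 : ℕ) = (p.2 : ℕ) + 1
  · rw [Finset.sum_eq_single_of_mem ((p.2 : ℕ))]
    · simp [ket2, h]
    · have := p.1.isLt
      exact Finset.mem_range.mpr (by omega)
    · intro j _ hj
      simp [ket2, Ne.symm hj]
  · rw [Finset.sum_eq_zero, if_neg h]
    intro j _
    simp only [ket2, ite_eq_right_iff]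
    rintro ⟨h1, h2⟩
    exact absurd (by omega : (p.1 : ℕ) = (p.2 : ℕ) + 1) h

lemma ptraceB_outerC_ket (d i j : ℕ) (hj : j < d) :
    ptraceB (outerC (ket2 d i j))
      = Matrix.of (fun p q : Fin d => if (p : ℕ) = i ∧ (q : ℕ) = i then (1 : ℂ) else 0) := by
  ext p q
  simp only [ptraceB, Matrix.of_apply, outerC, Matrix.vecMulVec_apply, ket2, Pi.star_apply,
    apply_ite (star : ℂ → ℂ), star_one, star_zero]
  rw [Finset.sum_eq_single (⟨j, hj⟩ : Fin d)]
  · split_ifs <;> simp_all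
  · intro m _ hm
    have : (m : ℕ) ≠ j := fun h => hm (Fin.ext h)
    split_ifs <;> simp_all
  · simp

lemma ptraceB_outerC_K (d : ℕ) :
    ptraceB (outerC (∑ j ∈ Finset.range (d-1), ket2 d (j+1) j))
      = Matrix.of (fun p q : Fin d =>
          if (p : ℕ) = (q : ℕ) ∧ 1 ≤ (p : ℕ) then (1 : ℂ) else 0) := by
  ext p q
  simp only [ptraceB, Matrix.of_apply, outerC, Matrix.vecMulVec_apply, Pi.star_apply, Kval,
    apply_ite (star : ℂ → ℂ), star_one, star_zero]
  by_cases h : (p : ℕ) = (q : ℕ) ∧ 1 ≤ (p : ℕ)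
  · obtain ⟨h1, h2⟩ := h
    have hlt : (p : ℕ) - 1 < d := by have := p.isLt; omega
    rw [Finset.sum_eq_single (⟨(p : ℕ) - 1, hlt⟩ : Fin d)]
    · simp only [if_pos (⟨h1, h2⟩ : _ ∧ _)]
      rw [if_pos (show (p : ℕ) = ((⟨(p : ℕ) - 1, hlt⟩ : Fin d) : ℕ) + 1 by
            simp only [Fin.val_mk]; omega),
          if_pos (show (q : ℕ) = ((⟨(p : ℕ) - 1, hlt⟩ : Fin d) : ℕ) + 1 by
            simp only [Fin.val_mk]; omega), one_mul]
    · intro m _ hm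
      have : (m : ℕ) ≠ (p : ℕ) - 1 := fun hh => hm (Fin.ext hh)
      rw [if_neg (by omega), zero_mul]
    · simp
  · rw [if_neg h, Finset.sum_eq_zero]
    intro m _
    by_cases h1 : (p : ℕ) = (m : ℕ) + 1
    · rw [if_pos h1, if_neg (by omega), mul_zero]
    · rw [if_neg h1, zero_mul]

lemma sum_range_pair (d : ℕ) (i k : Fin d) :
    (∑ j ∈ Finset.range (d-1), if (i : ℕ) = j + 1 ∧ (k : ℕ) = j + 1 then (1:ℂ) else 0)
      = if (i : ℕ) = (k : ℕ) ∧ 1 ≤ (i : ℕ) then 1 else 0 := by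
  by_cases h : (i : ℕ) = (k : ℕ) ∧ 1 ≤ (i : ℕ)
  · obtain ⟨h1, h2⟩ := h
    rw [Finset.sum_eq_single_of_mem ((i : ℕ) - 1)]
    · rw [if_pos (by omega), if_pos (⟨h1, h2⟩ : _ ∧ _)]
    · have := i.isLt; exact Finset.mem_range.mpr (by omega)
    · intro j _ hj
      rw [if_neg (by omega)]
  · rw [if_neg h, Finset.sum_eq_zero]
    intro j _
    rw [if_neg (by omega)]

end Aux2

section Aux3

open Matrix ComplexOrder

/-- the scalar c = 1/√(d-1) -/
noncomputable def cR (d : ℕ) : ℝ := 1 / Real.sqrt ((d : ℝ) - 1)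
/-- the scalar s = √c -/
noncomputable def sR (d : ℕ) : ℝ := Real.sqrt (cR d)

lemma cR_nonneg (d : ℕ) : 0 ≤ cR d := by unfold cR; positivity
lemma sR_mul_self (d : ℕ) : sR d * sR d = cR d := Real.mul_self_sqrt (cR_nonneg d)

noncomputable def eV (d : ℕ) : Fin d × Fin d → ℂ := ket2 d 0 (d-1)
noncomputable def KV (d : ℕ) : Fin d × Fin d → ℂ := ∑ j ∈ Finset.range (d-1), ket2 d (j+1) j
noncomputable def xiV (d : ℕ) : Fin d × Fin d → ℂ := ((sR d : ℝ) : ℂ) • KV d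
noncomputable def vV (d : ℕ) : Fin d × Fin d → ℂ := ((sR d : ℝ) : ℂ) • eV d - xiV d
noncomputable def wV (d : ℕ) : Fin d × Fin d → ℂ := ((sR d : ℝ) : ℂ) • eV d + xiV d

noncomputable def DM (d : ℕ) : Matrix (Fin d × Fin d) (Fin d × Fin d) ℂ :=
  ∑ j ∈ Finset.range (d-1),
    ((1 / ((d : ℂ) - 1)) • outerC (ket2 d 0 j) + outerC (ket2 d (j+1) (d-1)))

noncomputable def crossM (d : ℕ) : Matrix (Fin d × Fin d) (Fin d × Fin d) ℂ :=
  Matrix.vecMulVec (eV d) (star (KV d)) + Matrix.vecMulVec (KV d) (star (eV d))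

noncomputable def YM (d : ℕ) : Matrix (Fin d × Fin d) (Fin d × Fin d) ℂ :=
  DM d + ((cR d : ℝ) : ℂ) • outerC (eV d) + outerC (xiV d)

lemma choi_pt (d : ℕ) :
    ptransposeB (choiMd d) = DM d + ((cR d : ℝ) : ℂ) • crossM d := by
  rw [choiMd, ptransposeB_sum]
  have hterm : ∀ j ∈ Finset.range (d-1),
      ptransposeB
        ((1 / ((d : ℂ) - 1)) • Matrix.vecMulVec (ket2 d 0 j) (star (ket2 d 0 j)) +
          Matrix.vecMulVec (ket2 d (j+1) (d-1)) (star (ket2 d (j+1) (d-1))) +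
          ((1 / (Real.sqrt ((d : ℝ) - 1)) : ℝ) : ℂ) •
            (Matrix.vecMulVec (ket2 d 0 j) (star (ket2 d (j+1) (d-1))) +
              Matrix.vecMulVec (ket2 d (j+1) (d-1)) (star (ket2 d 0 j))))
        = ((1 / ((d : ℂ) - 1)) • outerC (ket2 d 0 j) + outerC (ket2 d (j+1) (d-1)))
          + ((cR d : ℝ) : ℂ) •
            (Matrix.vecMulVec (eV d) (star (ket2 d (j+1) j)) +
              Matrix.vecMulVec (ket2 d (j+1) j) (star (eV d))) := by
    intro j _
    rw [ptransposeB_add, ptransposeB_add, ptransposeB_smul, ptransposeB_smul, ptransposeB_add,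
      ptransposeB_ket, ptransposeB_ket, ptransposeB_ket, ptransposeB_ket]
    rfl
  rw [Finset.sum_congr rfl hterm, Finset.sum_add_distrib, ← Finset.smul_sum]
  congr 1
  rw [crossM, KV, star_sum, vecMulVec_sum_right, vecMulVec_sum_left, Finset.sum_add_distrib]

lemma Y_decomp (d : ℕ) :
    YM d = DM d + (2⁻¹ : ℂ) • outerC (vV d) + (2⁻¹ : ℂ) • outerC (wV d) := by
  rw [YM, vV, wV, outerC_expand_sub, outerC_expand_add,
    show ((sR d : ℂ) * (sR d : ℂ)) = ((cR d : ℝ) : ℂ) by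
      rw [← Complex.ofReal_mul, sR_mul_self]]
  module

lemma negpt_decomp (d : ℕ) :
    -(ptransposeB (choiMd d))
      = -(DM d) + (2⁻¹ : ℂ) • outerC (vV d) - (2⁻¹ : ℂ) • outerC (wV d) := by
  have hxi : star (xiV d) = ((sR d : ℝ) : ℂ) • star (KV d) := by
    rw [xiV, star_smul, Complex.star_def, Complex.conj_ofReal]
  have hcross : ((sR d : ℝ) : ℂ) •
      (Matrix.vecMulVec (eV d) (star (xiV d)) + Matrix.vecMulVec (xiV d) (star (eV d)))
        = ((cR d : ℝ) : ℂ) • crossM d := by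
    rw [hxi, xiV, vecMulVec_smul_right, vecMulVec_smul_left, crossM, smul_add, smul_smul,
      smul_smul, ← Complex.ofReal_mul, sR_mul_self, smul_add]
  rw [choi_pt, vV, wV, outerC_expand_sub, outerC_expand_add,
    show ((sR d : ℂ) * (sR d : ℂ)) = ((cR d : ℝ) : ℂ) by
      rw [← Complex.ofReal_mul, sR_mul_self], ← hcross]
  module

end Aux3

section Aux4

open Matrix ComplexOrder

noncomputable def BD (d : ℕ) :
    Matrix ((Fin d × Fin d) ⊕ (Fin d × Fin d)) ((Fin d × Fin d) ⊕ (Fin d × Fin d)) ℂ :=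
  ∑ j ∈ Finset.range (d-1),
    ((1 / ((d : ℂ) - 1)) • outerC (Sum.elim (ket2 d 0 j) (-(ket2 d 0 j)))
      + outerC (Sum.elim (ket2 d (j+1) (d-1)) (-(ket2 d (j+1) (d-1)))))

lemma BD_eq (d : ℕ) :
    BD d = Matrix.fromBlocks (DM d) (-(DM d)) (-(DM d)) (DM d) := by
  rw [BD, DM]
  simp_rw [outerC_elim_neg, Matrix.fromBlocks_smul, fromBlocks_add, fromBlocks_sum]
  congr <;> simp [smul_neg, ← Finset.sum_neg_distrib, neg_add, add_comm]

lemma block_decomp (d : ℕ) :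
    Matrix.fromBlocks (YM d) (-(ptransposeB (choiMd d)))
        (-(ptransposeB (choiMd d))) (YM d)
      = BD d + (2⁻¹ : ℂ) • outerC (Sum.elim (vV d) (vV d))
          + (2⁻¹ : ℂ) • outerC (Sum.elim (wV d) (-(wV d))) := by
  rw [Y_decomp, negpt_decomp, BD_eq, outerC_elim_pos, outerC_elim_neg,
    Matrix.fromBlocks_smul, Matrix.fromBlocks_smul, fromBlocks_add, fromBlocks_add]
  ext i j
  rcases i with i | i <;> rcases j with j | j <;>
    simp only [Matrix.fromBlocks_apply₁₁, Matrix.fromBlocks_apply₁₂,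
      Matrix.fromBlocks_apply₂₁, Matrix.fromBlocks_apply₂₂, Matrix.add_apply,
      Matrix.smul_apply, Matrix.neg_apply, Matrix.sub_apply, smul_eq_mul] <;> ring

end Aux4

section Aux5

open Matrix ComplexOrder

lemma alpha_nonneg (d : ℕ) (hd : 2 ≤ d) : (0 : ℂ) ≤ 1 / ((d : ℂ) - 1) := by
  have h1 : ((1 / ((d : ℝ) - 1) : ℝ) : ℂ) = 1 / ((d : ℂ) - 1) := by push_cast; ring
  rw [← h1]
  refine Complex.zero_le_real.mpr ?_
  have : (2 : ℝ) ≤ (d : ℝ) := by exact_mod_cast hd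
  have : (0 : ℝ) < (d : ℝ) - 1 := by linarith
  positivity

lemma cC_nonneg (d : ℕ) : (0 : ℂ) ≤ ((cR d : ℝ) : ℂ) :=
  Complex.zero_le_real.mpr (cR_nonneg d)

lemma half_nonneg : (0 : ℂ) ≤ (2⁻¹ : ℂ) := by
  rw [show (2⁻¹ : ℂ) = (((2⁻¹ : ℝ)) : ℂ) by norm_num]
  exact Complex.zero_le_real.mpr (by norm_num)

lemma DM_psd (d : ℕ) (hd : 2 ≤ d) : (DM d).PosSemidef := by
  refine psd_sum _ _ fun j _ => ?_
  exact (psd_smulC (outerC_posSemidef _) (alpha_nonneg d hd)).add (outerC_posSemidef _)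

lemma YM_psd (d : ℕ) (hd : 2 ≤ d) : (YM d).PosSemidef := by
  rw [YM]
  exact ((DM_psd d hd).add (psd_smulC (outerC_posSemidef _) (cC_nonneg d))).add
    (outerC_posSemidef _)

lemma BD_psd (d : ℕ) (hd : 2 ≤ d) : (BD d).PosSemidef := by
  refine psd_sum _ _ fun j _ => ?_
  exact (psd_smulC (outerC_posSemidef _) (alpha_nonneg d hd)).add (outerC_posSemidef _)

lemma block_psd (d : ℕ) (hd : 2 ≤ d) :
    (Matrix.fromBlocks (YM d) (-(ptransposeB (choiMd d)))
        (-(ptransposeB (choiMd d))) (YM d)).PosSemidef := by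
  rw [block_decomp]
  exact ((BD_psd d hd).add (psd_smulC (outerC_posSemidef _) half_nonneg)).add
    (psd_smulC (outerC_posSemidef _) half_nonneg)

lemma trace_Y (d : ℕ) (hd : 2 ≤ d) :
    ptraceB (YM d)
      = (((1 + 1 / Real.sqrt ((d : ℝ) - 1) : ℝ)) : ℂ) • (1 : Matrix (Fin d) (Fin d) ℂ) := by
  have hd1 : ((d - 1 : ℕ) : ℂ) = (d : ℂ) - 1 := by
    rw [Nat.cast_sub (by omega : 1 ≤ d)]; simp
  have hne : (d : ℂ) - 1 ≠ 0 := by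
    rw [← hd1]
    exact_mod_cast Nat.cast_ne_zero.mpr (by omega : d - 1 ≠ 0)
  have hxi : outerC (xiV d) = ((cR d : ℝ) : ℂ) • outerC (KV d) := by
    rw [xiV, outerC_smul_real, sR_mul_self]
  rw [YM, ptraceB_add, ptraceB_add, ptraceB_smul, hxi, ptraceB_smul, DM, ptraceB_sum]
  have hterm : ∀ j ∈ Finset.range (d - 1),
      ptraceB ((1 / ((d : ℂ) - 1)) • outerC (ket2 d 0 j) + outerC (ket2 d (j+1) (d-1)))
        = (1 / ((d : ℂ) - 1)) •
            Matrix.of (fun p q : Fin d => if (p : ℕ) = 0 ∧ (q : ℕ) = 0 then (1:ℂ) else 0)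
          + Matrix.of (fun p q : Fin d =>
              if (p : ℕ) = j + 1 ∧ (q : ℕ) = j + 1 then (1:ℂ) else 0) := by
    intro j hj
    rw [ptraceB_add, ptraceB_smul, ptraceB_outerC_ket d 0 j (by
        have := Finset.mem_range.mp hj; omega),
      ptraceB_outerC_ket d (j+1) (d-1) (by omega)]
  rw [Finset.sum_congr rfl hterm, eV, ptraceB_outerC_ket d 0 (d-1) (by omega), KV,
    ptraceB_outerC_K]
  ext i k
  simp only [Matrix.add_apply, Matrix.smul_apply, Matrix.sum_apply, Matrix.of_apply,
    Matrix.one_apply, smul_eq_mul]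
  rw [Finset.sum_add_distrib, Finset.sum_const, Finset.card_range, sum_range_pair,
    nsmul_eq_mul, hd1,
    show ((1 + 1 / Real.sqrt ((d : ℝ) - 1) : ℝ) : ℂ) = 1 + ((cR d : ℝ) : ℂ) by
      rw [cR]; push_cast; ring]
  by_cases hik : i = k
  · subst hik
    by_cases h0 : (i : ℕ) = 0
    · rw [if_pos ⟨h0, h0⟩, if_neg (by omega), if_pos rfl]
      field_simp
      ring
    · rw [if_neg (by simp [h0]), if_pos ⟨rfl, by omega⟩, if_pos rfl]
      ring
  · have hik' : (i : ℕ) ≠ (k : ℕ) := fun h => hik (Fin.ext h)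
    rw [if_neg (by omega), if_neg (by omega), if_neg hik]
    ring

end Aux5

/-- Feasible point for the diamond-norm SDP: ‖T∘M_d‖_⋄ ≤ 1 + 1/√(d−1), hence
Q(M_d) ≤ log₂(1 + 1/√(d−1)). -/
theorem stmt2 (d : ℕ) (hd : 2 ≤ d) :
    ∃ Y : Matrix (Fin d × Fin d) (Fin d × Fin d) ℂ,
      Y.PosSemidef ∧
      (Matrix.fromBlocks Y (-(ptransposeB (choiMd d)))
        (-(ptransposeB (choiMd d))) Y).PosSemidef ∧
      ptraceB Y =
        (((1 + 1 / Real.sqrt ((d : ℝ) - 1) : ℝ)) : ℂ) • (1 : Matrix (Fin d) (Fin d) ℂ) := by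
  exact ⟨YM d, YM_psd d hd, block_psd d hd, trace_Y d hd⟩
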